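/- For every w ∈ W and x ∈ C° the vector x − w x lies in the dual cone C*, i.e. [x − w x, y] ≥ 0 for all y ∈ C; moreover, for distinct w, w' ∈ W the sets (1 − w)(C°) = {x − w x : x ∈ C°} and (1 − w')(C°) are disjoint. -/

import Mathlib

noncomputable section

/-- The Minkowski bilinear form `[x, y] = -x₀y₀ + x₁y₁ + ⋯ + xₙyₙ` on `ℝ^{n+1}`. -/
def mink {n : ℕ} (x y : Fin (n + 1) → ℝ) : ℝ :=
  -(x 0 * y 0) + ∑ i : Fin n, x i.succ * y i.succ

/-- The hyperboloid model of hyperbolic `n`-space: `{x | [x, x] = -1, x₀ > 0}`. -/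
def hypSpace (n : ℕ) : Set (Fin (n + 1) → ℝ) :=
  {x | mink x x = -1 ∧ 0 < x 0}

/-- `g` is the Minkowski reflection `x ↦ x - 2([x, e]/[e, e]) e` in a vector `e` with
`[e, e] > 0`. -/
def IsMinkRefl {n : ℕ} (g : (Fin (n + 1) → ℝ) ≃ₗ[ℝ] (Fin (n + 1) → ℝ)) : Prop :=
  ∃ e : Fin (n + 1) → ℝ, 0 < mink e e ∧ ∀ x, g x = x - ((2 * mink x e) / mink e e) • e

/-- The union of the reflection hyperplanes (mirrors) of the Minkowski reflections
belonging to `W`; the mirror of a reflection is exactly its set of fixed points. -/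
def minkMirrors {n : ℕ} (W : Subgroup ((Fin (n + 1) → ℝ) ≃ₗ[ℝ] (Fin (n + 1) → ℝ))) :
    Set (Fin (n + 1) → ℝ) :=
  ⋃ g ∈ {g : (Fin (n + 1) → ℝ) ≃ₗ[ℝ] (Fin (n + 1) → ℝ) | g ∈ W ∧ IsMinkRefl g},
    {x : Fin (n + 1) → ℝ | g x = x}

variable {n : ℕ}

lemma mink_comm (x y : Fin (n+1) → ℝ) : mink x y = mink y x := by
  unfold mink; congr 1; · ring
  · exact Finset.sum_congr rfl fun i _ => mul_comm _ _

lemma mink_add_left (x y z : Fin (n+1) → ℝ) : mink (x + y) z = mink x z + mink y z := by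
  unfold mink; simp [add_mul, Finset.sum_add_distrib]; ring

lemma mink_smul_left (t : ℝ) (x z : Fin (n+1) → ℝ) : mink (t • x) z = t * mink x z := by
  unfold mink
  simp only [Pi.smul_apply, smul_eq_mul]
  rw [mul_add, Finset.mul_sum]
  congr 1
  · ring
  · exact Finset.sum_congr rfl fun i _ => by ring

lemma mink_neg_left (x z : Fin (n+1) → ℝ) : mink (-x) z = - mink x z := by
  have := mink_smul_left (n := n) (-1) x z; simpa using this

lemma mink_sub_left (x y z : Fin (n+1) → ℝ) : mink (x - y) z = mink x z - mink y z := by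
  rw [sub_eq_add_neg, mink_add_left, mink_neg_left]; ring

lemma mink_add_right (x y z : Fin (n+1) → ℝ) : mink x (y + z) = mink x y + mink x z := by
  rw [mink_comm, mink_add_left, mink_comm y x, mink_comm z x]

lemma mink_smul_right (t : ℝ) (x z : Fin (n+1) → ℝ) : mink x (t • z) = t * mink x z := by
  rw [mink_comm, mink_smul_left, mink_comm]

lemma mink_sub_right (x y z : Fin (n+1) → ℝ) : mink x (y - z) = mink x y - mink x z := by
  rw [mink_comm, mink_sub_left, mink_comm y x, mink_comm z x]

lemma mink_zero_left (z : Fin (n+1) → ℝ) : mink 0 z = 0 := by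
  have := mink_smul_left (n := n) 0 0 z; simpa using this

lemma mink_zero_right (z : Fin (n+1) → ℝ) : mink z 0 = 0 := by
  rw [mink_comm]; exact mink_zero_left z

lemma mink_continuous_right (x : Fin (n+1) → ℝ) : Continuous fun z => mink x z := by
  unfold mink
  refine Continuous.add (by fun_prop) ?_
  exact continuous_finset_sum _ fun i _ => by fun_prop

lemma mink_continuous_left (y : Fin (n+1) → ℝ) : Continuous fun z => mink z y := by
  simp_rw [mink_comm _ y]; exact mink_continuous_right y

lemma mink_self_continuous : Continuous fun z : Fin (n+1) → ℝ => mink z z := by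
  unfold mink
  refine Continuous.add (by fun_prop) ?_
  exact continuous_finset_sum _ fun i _ => by fun_prop

lemma hyp_sum_sq {z : Fin (n+1) → ℝ} (hz : z ∈ hypSpace n) :
    (∑ i : Fin n, z i.succ ^ 2) = z 0 ^ 2 - 1 := by
  have h := hz.1; unfold mink at h
  have : ∑ i : Fin n, z i.succ * z i.succ = ∑ i : Fin n, z i.succ ^ 2 :=
    Finset.sum_congr rfl fun i _ => (sq (z i.succ)).symm
  nlinarith [h]

lemma hyp_one_le {z : Fin (n+1) → ℝ} (hz : z ∈ hypSpace n) : 1 ≤ z 0 := by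
  have h := hyp_sum_sq hz
  have h2 : 0 ≤ ∑ i : Fin n, z i.succ ^ 2 := Finset.sum_nonneg fun i _ => sq_nonneg _
  nlinarith [hz.2]

/-- master Cauchy-Schwarz-type bound -/
lemma mink_le_hyp {a b : Fin (n+1) → ℝ} (ha : a ∈ hypSpace n) (hb : b ∈ hypSpace n) :
    mink a b ≤ -(a 0 * b 0) + Real.sqrt ((a 0)^2 - 1) * Real.sqrt ((b 0)^2 - 1) := by
  unfold mink
  have := Real.sum_mul_le_sqrt_mul_sqrt (Finset.univ) (fun i : Fin n => a i.succ)
    (fun i : Fin n => b i.succ)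
  rw [hyp_sum_sq ha, hyp_sum_sq hb] at this
  linarith

lemma mink_le_neg_one {a b : Fin (n+1) → ℝ} (ha : a ∈ hypSpace n) (hb : b ∈ hypSpace n) :
    mink a b ≤ -1 := by
  have h := mink_le_hyp ha hb
  have ha0 := hyp_one_le ha; have hb0 := hyp_one_le hb
  have h1 : Real.sqrt ((a 0)^2 - 1) * Real.sqrt ((b 0)^2 - 1)
      = Real.sqrt (((a 0)^2 - 1) * ((b 0)^2 - 1)) :=
    (Real.sqrt_mul (by nlinarith) _).symm
  have h2 : Real.sqrt (((a 0)^2 - 1) * ((b 0)^2 - 1)) ≤ a 0 * b 0 - 1 := by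
    calc Real.sqrt (((a 0)^2 - 1) * ((b 0)^2 - 1)) ≤ Real.sqrt ((a 0 * b 0 - 1)^2) :=
          Real.sqrt_le_sqrt (by nlinarith [sq_nonneg (a 0 - b 0)])
      _ = a 0 * b 0 - 1 := Real.sqrt_sq (by nlinarith)
  nlinarith [h, h1, h2]

lemma mink_le_cap {c z : Fin (n+1) → ℝ} (hc : c ∈ hypSpace n) (hz : z ∈ hypSpace n) :
    mink c z ≤ (Real.sqrt ((c 0)^2 - 1) - c 0) * z 0 := by
  have h := mink_le_hyp hc hz
  have hz0 := hyp_one_le hz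
  have h2 : Real.sqrt ((z 0)^2 - 1) ≤ z 0 := by
    calc Real.sqrt ((z 0)^2 - 1) ≤ Real.sqrt ((z 0)^2) := Real.sqrt_le_sqrt (by nlinarith)
      _ = z 0 := Real.sqrt_sq (by linarith)
  have h3 : 0 ≤ Real.sqrt ((c 0)^2 - 1) := Real.sqrt_nonneg _
  nlinarith [h]

lemma sqrt_lt_self_hyp {c : Fin (n+1) → ℝ} (hc : c ∈ hypSpace n) :
    Real.sqrt ((c 0)^2 - 1) - c 0 < 0 := by
  have hc0 := hyp_one_le hc
  have : Real.sqrt ((c 0)^2 - 1) < c 0 := by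
    calc Real.sqrt ((c 0)^2 - 1) < Real.sqrt ((c 0)^2) :=
          Real.sqrt_lt_sqrt (by nlinarith) (by nlinarith)
      _ = c 0 := Real.sqrt_sq (by linarith)
  linarith

lemma eq_zero_of_coords {v : Fin (n+1) → ℝ} (h0 : v 0 = 0) (hs : ∀ i : Fin n, v i.succ = 0) :
    v = 0 := by
  funext j
  refine Fin.cases ?_ ?_ j
  · exact h0
  · exact hs

lemma timelike_orth {a v : Fin (n+1) → ℝ} (ha : a ∈ hypSpace n)
    (hav : mink a v = 0) (hvv : mink v v ≤ 0) : v = 0 := by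
  have ha0 := hyp_one_le ha
  have hS := hyp_sum_sq ha
  set S := ∑ i : Fin n, v i.succ ^ 2 with hSdef
  have hCS : (∑ i : Fin n, a i.succ * v i.succ)^2 ≤ ((a 0)^2 - 1) * S := by
    have := Finset.sum_mul_sq_le_sq_mul_sq Finset.univ (fun i : Fin n => a i.succ)
      (fun i : Fin n => v i.succ)
    rw [hS] at this; exact this
  have hsum : ∑ i : Fin n, a i.succ * v i.succ = a 0 * v 0 := by
    unfold mink at hav; linarith
  have hvv' : S - (v 0)^2 ≤ 0 := by
    unfold mink at hvv
    have : ∑ i : Fin n, v i.succ * v i.succ = S := by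
      exact Finset.sum_congr rfl fun i _ => (sq (v i.succ)).symm
    nlinarith
  have hSnonneg : 0 ≤ S := Finset.sum_nonneg fun i _ => sq_nonneg _
  have h1 : (a 0 * v 0)^2 ≤ ((a 0)^2 - 1) * S := by rw [← hsum]; exact hCS
  have h2 : (a 0)^2 * S ≤ (a 0)^2 * (v 0)^2 :=
    mul_le_mul_of_nonneg_left (by linarith) (sq_nonneg _)
  have hS0 : S = 0 := by nlinarith [h1, h2]
  have htail : ∀ i : Fin n, v i.succ = 0 := by
    intro i
    have h := (Finset.sum_eq_zero_iff_of_nonneg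
      (s := Finset.univ) (f := fun j : Fin n => v j.succ ^ 2)
      (fun j _ => sq_nonneg _)).mp hS0 i (Finset.mem_univ i)
    exact pow_eq_zero_iff (by norm_num) |>.mp h
  have hsum0 : ∑ i : Fin n, a i.succ * v i.succ = 0 :=
    Finset.sum_eq_zero fun i _ => by rw [htail i]; ring
  have h0 : v 0 = 0 := by
    rw [hsum0] at hsum
    have : a 0 ≠ 0 := by linarith
    field_simp at hsum
    exact (mul_eq_zero.mp hsum.symm).resolve_left this
  exact eq_zero_of_coords h0 htail

lemma strict_hyp_lt {a b : Fin (n+1) → ℝ} (ha : a ∈ hypSpace n) (hb : b ∈ hypSpace n)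
    (hab : a ≠ b) : mink a b < -1 := by
  rcases lt_or_eq_of_le (mink_le_neg_one ha hb) with h | h
  · exact h
  · exfalso
    have hvv : mink (a - b) (a - b) = 0 := by
      rw [mink_sub_left, mink_sub_right, mink_sub_right, ha.1, hb.1, mink_comm b a, h]; ring
    have hav : mink a (a - b) = 0 := by rw [mink_sub_right, ha.1, h]; ring
    have := timelike_orth ha hav (le_of_eq hvv)
    exact hab (sub_eq_zero.mp this)

lemma mink_nondegenerate {u : Fin (n+1) → ℝ} (h : ∀ y, mink u y = 0) : u = 0 := by
  refine eq_zero_of_coords ?_ ?_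
  · have := h (Pi.single 0 1)
    unfold mink at this
    simp [Pi.single_apply, Fin.succ_ne_zero] at this
    exact this
  · intro j
    have := h (Pi.single j.succ 1)
    unfold mink at this
    have hz : (Pi.single j.succ 1 : Fin (n+1) → ℝ) 0 = 0 :=
      Pi.single_eq_of_ne (Ne.symm (Fin.succ_ne_zero j)) 1
    rw [hz] at this
    have hsum : ∑ i : Fin n, u i.succ * (Pi.single j.succ 1 : Fin (n+1) → ℝ) i.succ
        = u j.succ := by
      rw [Finset.sum_eq_single j]
      · rw [Pi.single_eq_same]; ring
      · intro i _ hij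
        have hne : i.succ ≠ j.succ := fun hc => hij (Fin.succ_injective n hc)
        rw [Pi.single_eq_of_ne hne]; ring
      · intro hj; exact absurd (Finset.mem_univ j) hj
    rw [hsum] at this
    linarith

/-- compact caps of the hyperboloid -/
def hypCap (n : ℕ) (M : ℝ) : Set (Fin (n + 1) → ℝ) := {z | z ∈ hypSpace n ∧ z 0 ≤ M}

lemma hypCap_subset (M : ℝ) : hypCap n M ⊆ hypSpace n := fun z hz => hz.1

lemma hypCap_compact (M : ℝ) : IsCompact (hypCap n M) := by
  rw [Metric.isCompact_iff_isClosed_bounded]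
  constructor
  · have : hypCap n M =
        ((fun z : Fin (n+1) → ℝ => mink z z) ⁻¹' {-1}) ∩
        ((fun z : Fin (n+1) → ℝ => z 0) ⁻¹' (Set.Ici 1)) ∩
        ((fun z : Fin (n+1) → ℝ => z 0) ⁻¹' (Set.Iic M)) := by
      ext z
      constructor
      · intro hz
        exact ⟨⟨hz.1.1, hyp_one_le hz.1⟩, hz.2⟩
      · rintro ⟨⟨h1, h2⟩, h3⟩
        exact ⟨⟨h1, lt_of_lt_of_le one_pos h2⟩, h3⟩
    rw [this]
    refine IsClosed.inter (IsClosed.inter ?_ ?_) ?_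
    · exact IsClosed.preimage mink_self_continuous isClosed_singleton
    · exact IsClosed.preimage (continuous_apply 0) isClosed_Ici
    · exact IsClosed.preimage (continuous_apply 0) isClosed_Iic
  · rw [Metric.isBounded_iff_subset_closedBall 0]
    refine ⟨|M| + 1, fun z hz => ?_⟩
    have hz1 := hyp_one_le hz.1
    have hzM := hz.2
    have hsq := hyp_sum_sq hz.1
    simp only [Metric.mem_closedBall, dist_zero_right]
    rw [pi_norm_le_iff_of_nonneg (by positivity)]
    intro i
    simp only [Pi.zero_apply, Real.norm_eq_abs]
    have hM : z 0 ≤ |M| := le_trans hzM (le_abs_self M)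
    refine Fin.cases ?_ ?_ i
    · rw [abs_of_nonneg (by linarith)]; linarith
    · intro j
      have : (z j.succ)^2 ≤ (z 0)^2 - 1 := by
        rw [← hsq]
        refine Finset.single_le_sum (f := fun i : Fin n => z i.succ ^ 2)
          (fun i _ => sq_nonneg _) (Finset.mem_univ j)
      have : |z j.succ| ≤ z 0 := by
        rw [← abs_of_nonneg (show (0:ℝ) ≤ z 0 by linarith), ← Real.sqrt_sq_eq_abs,
          ← Real.sqrt_sq_eq_abs]
        exact Real.sqrt_le_sqrt (by nlinarith)
      linarith

lemma expcomb_pos {α β t T : ℝ} (ht : 0 ≤ t) (htT : t ≤ T)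
    (h0 : 0 < α + β) (hT : 0 < α * Real.exp T + β * Real.exp (-T)) :
    0 < α * Real.exp t + β * Real.exp (-t) := by
  set E := Real.exp t with hE
  set Q := Real.exp T with hQ
  have hEpos : 0 < E := Real.exp_pos t
  have hQpos : 0 < Q := Real.exp_pos T
  have hE1 : 1 ≤ E := Real.one_le_exp ht
  have hEQ : E ≤ Q := Real.exp_le_exp.mpr htT
  have hEinv : Real.exp (-t) = E⁻¹ := Real.exp_neg t
  have hQinv : Real.exp (-T) = Q⁻¹ := Real.exp_neg T
  rw [hEinv]
  rw [hQinv] at hT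
  have key : 0 < α * (E * E) + β := by
    rcases le_or_gt 0 α with hα | hα
    · have hEE : 1 ≤ E * E := by nlinarith
      nlinarith
    · have hQT : 0 < α * (Q * Q) + β := by
        have := mul_pos hT hQpos
        have hq : (α * Q + β * Q⁻¹) * Q = α * (Q * Q) + β := by
          field_simp
        nlinarith [this, hq]
      nlinarith [mul_le_mul_of_nonneg_left (mul_le_mul hEQ hEQ hEpos.le hQpos.le) (le_of_lt (neg_pos.mpr hα))]
  have hid : α * E + β * E⁻¹ = E⁻¹ * (α * (E * E) + β) := by
    field_simp
  rw [hid]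
  exact mul_pos (inv_pos.mpr hEpos) key

lemma expcomb_le_max {α β t T : ℝ} (ht : 0 ≤ t) (htT : t ≤ T)
    (h0 : 0 < α + β) (hT : 0 < α * Real.exp T + β * Real.exp (-T)) :
    α * Real.exp t + β * Real.exp (-t) ≤ max (α + β) (α * Real.exp T + β * Real.exp (-T)) := by
  set E := Real.exp t with hE
  set Q := Real.exp T with hQ
  have hEpos : 0 < E := Real.exp_pos t
  have hQpos : 0 < Q := Real.exp_pos T
  have hE1 : 1 ≤ E := Real.one_le_exp ht
  have hQ1 : 1 ≤ Q := Real.one_le_exp (le_trans ht htT)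
  have hEQ : E ≤ Q := Real.exp_le_exp.mpr htT
  have hEinv : Real.exp (-t) = E⁻¹ := Real.exp_neg t
  have hQinv : Real.exp (-T) = Q⁻¹ := Real.exp_neg T
  rw [hEinv, hQinv]
  rw [hQinv] at hT
  rcases le_or_gt α 0 with hα | hα
  · -- β > 0, bounded by value at 0
    have hβ : 0 < β := by linarith
    refine le_trans ?_ (le_max_left _ _)
    have h1 : α * E + β * E⁻¹ ≤ α * E + β := by
      have : E⁻¹ ≤ 1 := by
        rw [inv_le_one_iff₀]; right; exact hE1
      nlinarith
    nlinarith
  rcases le_or_gt β 0 with hβ | hβ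
  · -- α > 0, bounded by value at T
    refine le_trans ?_ (le_max_right _ _)
    have hiQE : Q⁻¹ ≤ E⁻¹ := by
      apply inv_anti₀ hEpos hEQ
    nlinarith
  · -- both positive
    rcases le_or_gt β (α * E * Q) with hcase | hcase
    · refine le_trans ?_ (le_max_right _ _)
      have expand : α * Q + β * Q⁻¹ - (α * E + β * E⁻¹)
          = ((Q - E) * (α * E * Q - β)) / (E * Q) := by
        field_simp; ring
      have : 0 ≤ ((Q - E) * (α * E * Q - β)) / (E * Q) :=
        div_nonneg (mul_nonneg (by linarith) (by linarith)) (by positivity)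
      linarith
    · refine le_trans ?_ (le_max_left _ _)
      have expand : (α + β) - (α * E + β * E⁻¹) = ((E - 1) * (β - α * E)) / E := by
        field_simp; ring
      have hβαE : α * E ≤ β := by nlinarith
      have : 0 ≤ ((E - 1) * (β - α * E)) / E :=
        div_nonneg (mul_nonneg (by linarith) (by linarith)) (by positivity)
      linarith

lemma mink_combo (c1 c2 : ℝ) (a u e : Fin (n+1) → ℝ) :
    mink (c1 • a + c2 • u) e = c1 * mink a e + c2 * mink u e := by
  rw [mink_add_left, mink_smul_left, mink_smul_left]

lemma mink_combo2 (c1 c2 d1 d2 : ℝ) (a u : Fin (n+1) → ℝ) :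
    mink (c1 • a + c2 • u) (d1 • a + d2 • u)
      = c1*d1 * mink a a + (c1*d2 + c2*d1) * mink a u + c2*d2 * mink u u := by
  simp only [mink_add_left, mink_add_right, mink_smul_left, mink_smul_right]
  rw [mink_comm u a]; ring

lemma coshcomb (A B t : ℝ) : Real.cosh t * A + Real.sinh t * B
    = (A + B)/2 * Real.exp t + (A - B)/2 * Real.exp (-t) := by
  rw [Real.cosh_eq, Real.sinh_eq]; ring

lemma geodesic_exists {a b : Fin (n+1) → ℝ} (ha : a ∈ hypSpace n) (hb : b ∈ hypSpace n)
    (hab : a ≠ b) :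
    ∃ T : ℝ, 0 < T ∧ ∃ γ : ℝ → (Fin (n+1) → ℝ),
      Continuous γ ∧ γ 0 = a ∧ γ T = b ∧
      (∀ t ∈ Set.Icc (0:ℝ) T, γ t ∈ hypSpace n ∧ γ t 0 ≤ max (a 0) (b 0)) ∧
      (∀ e : Fin (n+1) → ℝ, 0 < mink a e * mink b e →
        ∀ t ∈ Set.Icc (0:ℝ) T, mink (γ t) e ≠ 0) := by
  set cT := -mink a b with hcTdef
  have hcT : 1 < cT := by have := strict_hyp_lt ha hb hab; simp only [hcTdef]; linarith
  set sT := Real.sqrt (cT^2 - 1) with hsTdef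
  have hsT2 : sT^2 = cT^2 - 1 := Real.sq_sqrt (by nlinarith)
  have hsTpos : 0 < sT := Real.sqrt_pos.mpr (by nlinarith)
  have hmab : mink a b = -cT := by simp [hcTdef]
  obtain ⟨u, hau, huu, hbu⟩ : ∃ u : Fin (n+1) → ℝ,
      mink a u = 0 ∧ mink u u = 1 ∧ b = cT • a + sT • u := by
    refine ⟨sT⁻¹ • (b - cT • a), ?_, ?_, ?_⟩
    · rw [mink_smul_right, mink_sub_right, mink_smul_right, ha.1, hmab]; ring
    · rw [mink_smul_right, mink_smul_left, mink_sub_left, mink_sub_right, mink_sub_right,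
        mink_smul_right, mink_smul_right, mink_smul_left, mink_smul_left, ha.1, hb.1, hmab,
        mink_comm b a, hmab]
      field_simp
      nlinarith [hsT2]
    · rw [smul_smul, mul_inv_cancel₀ (ne_of_gt hsTpos), one_smul]
      abel
  set T := Real.log (cT + sT) with hTdef
  have hcsPos : 1 < cT + sT := by linarith
  have hTpos : 0 < T := Real.log_pos hcsPos
  have hexpT : Real.exp T = cT + sT := Real.exp_log (by linarith)
  have hprod : (cT + sT) * (cT - sT) = 1 := by nlinarith [hsT2]
  have hexpnegT : Real.exp (-T) = cT - sT := by
    rw [Real.exp_neg, hexpT]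
    exact inv_eq_of_mul_eq_one_right hprod
  have hcoshT : Real.cosh T = cT := by rw [Real.cosh_eq, hexpT, hexpnegT]; ring
  have hsinhT : Real.sinh T = sT := by rw [Real.sinh_eq, hexpT, hexpnegT]; ring
  have hb0 : cT * a 0 + sT * u 0 = b 0 := by rw [hbu]; simp
  refine ⟨T, hTpos, fun t => Real.cosh t • a + Real.sinh t • u, ?_, ?_, ?_, ?_, ?_⟩
  · exact (Real.continuous_cosh.smul continuous_const).add
      (Real.continuous_sinh.smul continuous_const)
  · simp
  · show Real.cosh T • a + Real.sinh T • u = b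
    rw [hcoshT, hsinhT]; exact hbu.symm
  · intro t ht
    have hminkγ : mink (Real.cosh t • a + Real.sinh t • u) (Real.cosh t • a + Real.sinh t • u)
        = -1 := by
      rw [mink_combo2, ha.1, huu, hau]
      nlinarith [Real.cosh_sq_sub_sinh_sq t]
    have hcoord : ∀ s : ℝ, (Real.cosh s • a + Real.sinh s • u) 0
        = Real.cosh s * a 0 + Real.sinh s * u 0 := fun s => by simp
    have hpos : 0 < (Real.cosh t • a + Real.sinh t • u) 0 := by
      rw [hcoord, coshcomb]
      refine expcomb_pos ht.1 ht.2 ?_ ?_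
      · have := ha.2; linarith
      · rw [← coshcomb, hcoshT, hsinhT, hb0]
        exact hb.2
    refine ⟨⟨hminkγ, hpos⟩, ?_⟩
    show (Real.cosh t • a + Real.sinh t • u) 0 ≤ max (a 0) (b 0)
    rw [hcoord, coshcomb]
    refine le_trans (expcomb_le_max ht.1 ht.2 (by have := ha.2; linarith) ?_) ?_
    · rw [← coshcomb, hcoshT, hsinhT, hb0]; exact hb.2
    · have h1 : (a 0 + u 0)/2 + (a 0 - u 0)/2 = a 0 := by ring
      rw [h1, ← coshcomb, hcoshT, hsinhT, hb0]
  · intro e he t ht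
    have hexpand : mink (Real.cosh t • a + Real.sinh t • u) e
        = Real.cosh t * mink a e + Real.sinh t * mink u e := mink_combo _ _ _ _ _
    have hexpandT : Real.cosh T * mink a e + Real.sinh T * mink u e = mink b e := by
      conv_rhs => rw [hbu]
      rw [mink_combo, hcoshT, hsinhT]
    show mink (Real.cosh t • a + Real.sinh t • u) e ≠ 0
    rcases lt_trichotomy (mink a e) 0 with hA | hA | hA
    · have hB : mink b e < 0 := by nlinarith
      have hgt : 0 < Real.cosh t * (-(mink a e)) + Real.sinh t * (-(mink u e)) := by
        rw [coshcomb]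
        refine expcomb_pos ht.1 ht.2 (by linarith) ?_
        rw [← coshcomb]
        have h2 : Real.cosh T * (-(mink a e)) + Real.sinh T * (-(mink u e))
            = -(Real.cosh T * mink a e + Real.sinh T * mink u e) := by ring
        rw [h2, hexpandT]
        linarith
      rw [hexpand]; intro hc; rw [show Real.cosh t * mink a e + Real.sinh t * mink u e
        = -(Real.cosh t * (-(mink a e)) + Real.sinh t * (-(mink u e))) by ring] at hc
      linarith
    · exfalso; rw [hA] at he; simp at he
    · have hB : 0 < mink b e := by nlinarith
      have hgt : 0 < Real.cosh t * mink a e + Real.sinh t * mink u e := by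
        rw [coshcomb]
        refine expcomb_pos ht.1 ht.2 (by linarith) ?_
        rw [← coshcomb, hexpandT]
        exact hB
      rw [hexpand]; exact ne_of_gt hgt

section Main

variable {W : Subgroup ((Fin (n + 1) → ℝ) ≃ₗ[ℝ] (Fin (n + 1) → ℝ))}

lemma refl_fix_iff {g : (Fin (n + 1) → ℝ) ≃ₗ[ℝ] (Fin (n + 1) → ℝ)} {e : Fin (n+1) → ℝ}
    (he : 0 < mink e e) (hg : ∀ x, g x = x - ((2 * mink x e) / mink e e) • e) :
    ∀ v, g v = v ↔ mink v e = 0 := by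
  intro v
  have hene : e ≠ 0 := by
    intro hc; rw [hc, mink_zero_left] at he; exact lt_irrefl 0 he
  rw [hg v]
  constructor
  · intro h
    have h2 : ((2 * mink v e) / mink e e) • e = 0 := by
      have := sub_eq_self.mp h; exact this
    rcases smul_eq_zero.mp h2 with h3 | h3
    · field_simp at h3; linarith
    · exact absurd h3 hene
  · intro h; rw [h]; simp

lemma refl_ne_one {g : (Fin (n + 1) → ℝ) ≃ₗ[ℝ] (Fin (n + 1) → ℝ)} {e : Fin (n+1) → ℝ}
    (he : 0 < mink e e) (hg : ∀ x, g x = x - ((2 * mink x e) / mink e e) • e) :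
    g ≠ 1 := by
  intro hc
  have hene : e ≠ 0 := by
    intro hc'; rw [hc', mink_zero_left] at he; exact lt_irrefl 0 he
  have h1 : g e = e := by rw [hc]; rfl
  have h2 : g e = -e := by
    rw [hg e, mul_div_assoc, div_self (ne_of_gt he), mul_one, two_smul]
    abel
  have h3 : e + e = 0 := by
    have := h1.symm.trans h2
    nth_rewrite 1 [this]
    abel
  have h4 : (2:ℝ) • e = 0 := by rw [two_smul]; exact h3
  rcases smul_eq_zero.mp h4 with h5 | h5
  · norm_num at h5
  · exact hene h5

/-- membership in the mirrors from a fixed point of a reflection -/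
lemma mem_mirrors_of_fix {g : (Fin (n + 1) → ℝ) ≃ₗ[ℝ] (Fin (n + 1) → ℝ)}
    (hgW : g ∈ W) (hrefl : IsMinkRefl g) {v : Fin (n+1) → ℝ} (hv : g v = v) :
    v ∈ minkMirrors W := by
  unfold minkMirrors
  exact Set.mem_biUnion (show g ∈ {g | g ∈ W ∧ IsMinkRefl g} from ⟨hgW, hrefl⟩) hv

variable {D C : Set (Fin (n + 1) → ℝ)} {x₀ : Fin (n + 1) → ℝ}

/-- the interior of the chamber cone is off all mirrors, positively -/
lemma interior_not_fixed
    (hdisj : ∀ w ∈ W, ∀ w' ∈ W, w ≠ w' →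
      ∀ x ∈ interior C, ∀ x' ∈ interior C, w x ≠ w' x')
    {g : (Fin (n + 1) → ℝ) ≃ₗ[ℝ] (Fin (n + 1) → ℝ)} (hgW : g ∈ W)
    {e : Fin (n+1) → ℝ}
    (he : 0 < mink e e) (hg : ∀ x, g x = x - ((2 * mink x e) / mink e e) • e)
    {x : Fin (n+1) → ℝ} (hx : x ∈ interior C) : mink x e ≠ 0 := by
  intro hc
  have hfix : g x = x := (refl_fix_iff he hg x).mpr hc
  have h1 : g x ≠ (1 : (Fin (n + 1) → ℝ) ≃ₗ[ℝ] (Fin (n + 1) → ℝ)) x :=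
    hdisj g hgW 1 (one_mem W) (refl_ne_one he hg) x hx x hx
  exact h1 (by rw [hfix]; rfl)

/-- components of the complement of the mirrors: constant sign against any mirror -/
lemma comp_sign (hx₀ : x₀ ∈ hypSpace n \ minkMirrors W)
    {g : (Fin (n + 1) → ℝ) ≃ₗ[ℝ] (Fin (n + 1) → ℝ)} (hgW : g ∈ W)
    {e : Fin (n+1) → ℝ}
    (he : 0 < mink e e) (hg : ∀ x, g x = x - ((2 * mink x e) / mink e e) • e)
    {q q' : Fin (n+1) → ℝ}
    (hq : q ∈ connectedComponentIn (hypSpace n \ minkMirrors W) x₀)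
    (hq' : q' ∈ connectedComponentIn (hypSpace n \ minkMirrors W) x₀) :
    0 < mink q e * mink q' e := by
  set O := hypSpace n \ minkMirrors W with hO
  have hne : ∀ r ∈ connectedComponentIn O x₀, mink r e ≠ 0 := by
    intro r hr hc
    have hrO : r ∈ O := connectedComponentIn_subset O x₀ hr
    exact hrO.2 (mem_mirrors_of_fix hgW ⟨e, he, hg⟩ ((refl_fix_iff he hg r).mpr hc))
  have himg : IsPreconnected ((fun v => mink v e) '' connectedComponentIn O x₀) :=
    isPreconnected_connectedComponentIn.image _ ((mink_continuous_left e).continuousOn)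
  have hnz : (0:ℝ) ∉ (fun v => mink v e) '' connectedComponentIn O x₀ := by
    rintro ⟨r, hr, hr0⟩
    exact hne r hr hr0
  rcases lt_trichotomy (mink q e) 0 with h1 | h1 | h1
  · rcases lt_trichotomy (mink q' e) 0 with h2 | h2 | h2
    · nlinarith
    · exact absurd h2 (hne q' hq')
    · exfalso
      refine hnz ?_
      refine himg.Icc_subset (Set.mem_image_of_mem _ hq) (Set.mem_image_of_mem _ hq') ?_
      exact ⟨le_of_lt h1, le_of_lt h2⟩
  · exact absurd h1 (hne q hq)
  · rcases lt_trichotomy (mink q' e) 0 with h2 | h2 | h2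
    · exfalso
      refine hnz ?_
      refine himg.Icc_subset (Set.mem_image_of_mem _ hq') (Set.mem_image_of_mem _ hq) ?_
      exact ⟨le_of_lt h2, le_of_lt h1⟩
    · exact absurd h2 (hne q' hq')
    · nlinarith

/-- sign of an interior point of the cone against a mirror matches the component -/
lemma x_comp_sign (hx₀ : x₀ ∈ hypSpace n \ minkMirrors W)
    (hD : D = closure (connectedComponentIn (hypSpace n \ minkMirrors W) x₀) ∩ hypSpace n)
    (hdisj : ∀ w ∈ W, ∀ w' ∈ W, w ≠ w' →
      ∀ x ∈ interior C, ∀ x' ∈ interior C, w x ≠ w' x')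
    {g : (Fin (n + 1) → ℝ) ≃ₗ[ℝ] (Fin (n + 1) → ℝ)} (hgW : g ∈ W)
    {e : Fin (n+1) → ℝ}
    (he : 0 < mink e e) (hg : ∀ x, g x = x - ((2 * mink x e) / mink e e) • e)
    {x c : Fin (n+1) → ℝ} {t : ℝ} (hx : x ∈ interior C) (ht : 0 < t) (hc : c ∈ D)
    (hxc : x = t • c)
    {q : Fin (n+1) → ℝ}
    (hq : q ∈ connectedComponentIn (hypSpace n \ minkMirrors W) x₀) :
    0 < mink x e * mink q e := by
  set O := hypSpace n \ minkMirrors W with hO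
  have hA : closure (connectedComponentIn O x₀) ⊆ {v | 0 ≤ mink v e * mink q e} := by
    refine closure_minimal ?_ ?_
    · intro r hr
      exact le_of_lt (comp_sign hx₀ hgW he hg hr hq)
    · have : IsClosed {v : Fin (n+1) → ℝ | 0 ≤ mink v e * mink q e} := by
        have hcont : Continuous fun v : Fin (n+1) → ℝ => mink v e * mink q e :=
          (mink_continuous_left e).mul continuous_const
        exact isClosed_le continuous_const hcont
      exact this
  have hcD : c ∈ closure (connectedComponentIn O x₀) := by
    rw [hD] at hc; exact hc.1
  have hge : 0 ≤ mink c e * mink q e := hA hcD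
  have hxe : mink x e ≠ 0 := interior_not_fixed hdisj hgW he hg hx
  have hxe' : mink x e = t * mink c e := by rw [hxc, mink_smul_left]
  have hce : mink c e ≠ 0 := by
    intro h0; rw [h0] at hxe'; simp at hxe'; exact hxe hxe'
  have hqe : mink q e ≠ 0 := by
    intro h0
    have hrO : q ∈ O := connectedComponentIn_subset O x₀ hq
    exact hrO.2 (mem_mirrors_of_fix hgW ⟨e, he, hg⟩ ((refl_fix_iff he hg q).mpr h0))
  have : 0 < mink c e * mink q e := by
    rcases hge.lt_or_eq with h | h
    · exact h
    · exfalso; rcases mul_eq_zero.mp h.symm with h' | h'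
      · exact hce h'
      · exact hqe h'
  rw [hxe']
  nlinarith

/-- geodesic criterion for membership in the fundamental component -/
lemma geodesic_comp (hx₀ : x₀ ∈ hypSpace n \ minkMirrors W)
    {a b : Fin (n+1) → ℝ}
    (ha : a ∈ connectedComponentIn (hypSpace n \ minkMirrors W) x₀)
    (hb : b ∈ hypSpace n)
    (hsign : ∀ g ∈ W, ∀ e : Fin (n+1) → ℝ, 0 < mink e e →
      (∀ x, g x = x - ((2 * mink x e) / mink e e) • e) → 0 < mink a e * mink b e) :
    b ∈ connectedComponentIn (hypSpace n \ minkMirrors W) x₀ := by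
  set O := hypSpace n \ minkMirrors W with hO
  rcases eq_or_ne a b with rfl | hab
  · exact ha
  have haH : a ∈ hypSpace n := (connectedComponentIn_subset O x₀ ha).1
  obtain ⟨T, hTpos, γ, hγcont, hγ0, hγT, hγmem, hγavoid⟩ := geodesic_exists haH hb hab
  set Γ := γ '' Set.Icc (0:ℝ) T with hΓ
  have hΓO : Γ ⊆ O := by
    rintro _ ⟨t, ht, rfl⟩
    refine ⟨(hγmem t ht).1, ?_⟩
    intro hmem
    rw [minkMirrors, Set.mem_iUnion₂] at hmem
    obtain ⟨g, ⟨hgW, e, he, hg⟩, hfix⟩ := hmem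
    have h0 : mink (γ t) e = 0 := (refl_fix_iff he hg (γ t)).mp hfix
    exact hγavoid e (hsign g hgW e he hg) t ht h0
  have hΓconn : IsPreconnected Γ := isPreconnected_Icc.image γ hγcont.continuousOn
  have haΓ : a ∈ Γ := ⟨0, Set.mem_Icc.mpr ⟨le_refl 0, le_of_lt hTpos⟩, hγ0⟩
  have hsub : Γ ⊆ connectedComponentIn O a :=
    hΓconn.subset_connectedComponentIn haΓ hΓO
  have heq : connectedComponentIn O a = connectedComponentIn O x₀ :=
    (connectedComponentIn_eq ha).symm
  have hbΓ : b ∈ Γ := ⟨T, Set.mem_Icc.mpr ⟨le_of_lt hTpos, le_refl T⟩, hγT⟩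
  rw [← heq]
  exact hsub hbΓ

/-- points of the hyperboloid near a component point lie in the component -/
lemma comp_local
    (hpd : ∀ K : Set (Fin (n + 1) → ℝ), IsCompact K → K ⊆ hypSpace n →
      {g : (Fin (n + 1) → ℝ) ≃ₗ[ℝ] (Fin (n + 1) → ℝ) | g ∈ W ∧ ∃ x ∈ K, g x ∈ K}.Finite)
    (hx₀ : x₀ ∈ hypSpace n \ minkMirrors W)
    {q : Fin (n+1) → ℝ} (hq : q ∈ connectedComponentIn (hypSpace n \ minkMirrors W) x₀) :
    ∃ ε > 0, ∀ z ∈ hypSpace n, dist z q < ε →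
      z ∈ connectedComponentIn (hypSpace n \ minkMirrors W) x₀ := by
  set O := hypSpace n \ minkMirrors W with hO
  have hqO : q ∈ O := connectedComponentIn_subset O x₀ hq
  have hqH : q ∈ hypSpace n := hqO.1
  set K := hypCap n (q 0 + 2) with hK
  have hKcpt : IsCompact K := hypCap_compact _
  have hKsub : K ⊆ hypSpace n := hypCap_subset _
  have hFfin := hpd K hKcpt hKsub
  set G₀ := {g : (Fin (n + 1) → ℝ) ≃ₗ[ℝ] (Fin (n + 1) → ℝ) |
    (g ∈ W ∧ ∃ x ∈ K, g x ∈ K) ∧ IsMinkRefl g} with hG₀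
  have hG₀fin : G₀.Finite := hFfin.subset (fun g hg => hg.1)
  set U₀ := ⋃ g ∈ G₀, {v : Fin (n+1) → ℝ | g v = v} with hU₀
  have hU₀closed : IsClosed U₀ := by
    refine Set.Finite.isClosed_biUnion hG₀fin ?_
    intro g _
    have hgc : Continuous fun v : Fin (n+1) → ℝ => g v - v :=
      (LinearMap.continuous_of_finiteDimensional
        (g : (Fin (n+1) → ℝ) →ₗ[ℝ] (Fin (n+1) → ℝ))).sub continuous_id
    have : {v : Fin (n+1) → ℝ | g v = v} = (fun v => g v - v) ⁻¹' {0} := by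
      ext v; simp [sub_eq_zero]
    rw [this]
    exact IsClosed.preimage hgc isClosed_singleton
  have hqU₀ : q ∉ U₀ := by
    intro hc
    rw [hU₀, Set.mem_iUnion₂] at hc
    obtain ⟨g, hgG₀, hfix⟩ := hc
    exact hqO.2 (mem_mirrors_of_fix hgG₀.1.1 hgG₀.2 hfix)
  obtain ⟨δ, hδpos, hδ⟩ : ∃ δ > 0, Metric.ball q δ ⊆ U₀ᶜ :=
    Metric.isOpen_iff.mp hU₀closed.isOpen_compl q hqU₀
  refine ⟨min δ 1, lt_min hδpos one_pos, ?_⟩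
  intro z hzH hdz
  have hdzδ : dist z q < δ := lt_of_lt_of_le hdz (min_le_left _ _)
  have hdz1 : dist z q < 1 := lt_of_lt_of_le hdz (min_le_right _ _)
  rcases eq_or_ne q z with rfl | hne
  · exact hq
  have hz0 : z 0 < q 0 + 1 := by
    have h1 : dist (z 0) (q 0) ≤ dist z q := dist_le_pi_dist z q 0
    rw [Real.dist_eq] at h1
    have := abs_lt.mp (lt_of_le_of_lt h1 hdz1)
    linarith
  obtain ⟨T, hTpos, γ, hγcont, hγ0, hγT, hγmem, hγavoid⟩ := geodesic_exists hqH hzH hne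
  set Γ := γ '' Set.Icc (0:ℝ) T with hΓ
  have hΓK : ∀ t ∈ Set.Icc (0:ℝ) T, γ t ∈ K := by
    intro t ht
    refine ⟨(hγmem t ht).1, ?_⟩
    refine le_trans (hγmem t ht).2 ?_
    have hq1 := hyp_one_le hqH
    exact max_le (by linarith) (by linarith)
  have hΓO : Γ ⊆ O := by
    rintro _ ⟨t, ht, rfl⟩
    refine ⟨(hγmem t ht).1, ?_⟩
    intro hmem
    rw [minkMirrors, Set.mem_iUnion₂] at hmem
    obtain ⟨g, ⟨hgW, e, he, hg⟩, hfix⟩ := hmem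
    have hgG₀ : g ∈ G₀ := ⟨⟨hgW, γ t, hΓK t ht, by rw [hfix]; exact hΓK t ht⟩, ⟨e, he, hg⟩⟩
    -- endpoints strictly on the same side of this mirror
    have hqe : mink q e ≠ 0 := by
      intro h0
      exact hqU₀ (Set.mem_biUnion hgG₀ ((refl_fix_iff he hg q).mpr h0))
    have hze : mink z e ≠ 0 := by
      intro h0
      exact hδ (Metric.mem_ball.mpr hdzδ) (Set.mem_biUnion hgG₀ ((refl_fix_iff he hg z).mpr h0))
    have hsign : 0 < mink q e * mink z e := by
      rcases lt_trichotomy (mink q e * mink z e) 0 with hlt | heq0 | hgt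
      · exfalso
        -- intermediate value on the segment from q to z gives a fixed point in the ball
        set f : ℝ → ℝ := fun s => mink (q + s • (z - q)) e with hf
        have hfc : Continuous f := by
          have : Continuous fun s : ℝ => q + s • (z - q) :=
            continuous_const.add (continuous_id.smul continuous_const)
          exact (mink_continuous_left e).comp this
        have hf0 : f 0 = mink q e := by simp [hf]
        have hf1 : f 1 = mink z e := by
          simp only [hf, one_smul]
          congr 1
          abel
        have hzero : ∃ s ∈ Set.Icc (0:ℝ) 1, f s = 0 := by
          rcases lt_or_gt_of_ne hqe with hq0 | hq0
          · have hz0' : 0 < mink z e := by nlinarith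
            have := intermediate_value_Icc (le_of_lt one_pos) hfc.continuousOn
            have h0mem : (0:ℝ) ∈ Set.Icc (f 0) (f 1) := by
              rw [hf0, hf1]; exact ⟨le_of_lt hq0, le_of_lt hz0'⟩
            obtain ⟨s, hs, hfs⟩ := this h0mem
            exact ⟨s, hs, hfs⟩
          · have hz0' : mink z e < 0 := by nlinarith
            have := intermediate_value_Icc' (le_of_lt one_pos) hfc.continuousOn
            have h0mem : (0:ℝ) ∈ Set.Icc (f 1) (f 0) := by
              rw [hf0, hf1]; exact ⟨le_of_lt hz0', le_of_lt hq0⟩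
            obtain ⟨s, hs, hfs⟩ := this h0mem
            exact ⟨s, hs, hfs⟩
        obtain ⟨s, hs, hfs⟩ := hzero
        have hvball : q + s • (z - q) ∈ Metric.ball q δ := by
          rw [Metric.mem_ball, dist_eq_norm]
          have : q + s • (z - q) - q = s • (z - q) := by abel
          rw [this, norm_smul]
          have hs' : ‖s‖ ≤ 1 := by
            rw [Real.norm_eq_abs, abs_of_nonneg hs.1]; exact hs.2
          have hzq : ‖z - q‖ < δ := by
            rw [← dist_eq_norm]; exact hdzδ
          calc ‖s‖ * ‖z - q‖ ≤ 1 * ‖z - q‖ :=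
                mul_le_mul_of_nonneg_right hs' (norm_nonneg _)
            _ = ‖z - q‖ := one_mul _
            _ < δ := hzq
        exact hδ hvball (Set.mem_biUnion hgG₀ ((refl_fix_iff he hg _).mpr hfs))
      · exfalso
        rcases mul_eq_zero.mp heq0 with h | h
        · exact hqe h
        · exact hze h
      · exact hgt
    exact hγavoid e hsign t ht ((refl_fix_iff he hg (γ t)).mp hfix)
  have hΓconn : IsPreconnected Γ := isPreconnected_Icc.image γ hγcont.continuousOn
  have hqΓ : q ∈ Γ := ⟨0, Set.mem_Icc.mpr ⟨le_refl 0, le_of_lt hTpos⟩, hγ0⟩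
  have hsub : Γ ⊆ connectedComponentIn O q :=
    hΓconn.subset_connectedComponentIn hqΓ hΓO
  have heq : connectedComponentIn O q = connectedComponentIn O x₀ :=
    (connectedComponentIn_eq hq).symm
  have hzΓ : z ∈ Γ := ⟨T, Set.mem_Icc.mpr ⟨le_of_lt hTpos, le_refl T⟩, hγT⟩
  rw [← heq]
  exact hsub hzΓ

/-- positive multiples of component points are interior points of the chamber cone -/
lemma comp_subset_interior
    (hpd : ∀ K : Set (Fin (n + 1) → ℝ), IsCompact K → K ⊆ hypSpace n →
      {g : (Fin (n + 1) → ℝ) ≃ₗ[ℝ] (Fin (n + 1) → ℝ) | g ∈ W ∧ ∃ x ∈ K, g x ∈ K}.Finite)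
    (hx₀ : x₀ ∈ hypSpace n \ minkMirrors W)
    (hD : D = closure (connectedComponentIn (hypSpace n \ minkMirrors W) x₀) ∩ hypSpace n)
    (hC : C = {v : Fin (n + 1) → ℝ | ∃ t : ℝ, 0 ≤ t ∧ ∃ d ∈ D, v = t • d})
    {q : Fin (n+1) → ℝ} (hq : q ∈ connectedComponentIn (hypSpace n \ minkMirrors W) x₀)
    {s : ℝ} (hs : 0 < s) : s • q ∈ interior C := by
  set O := hypSpace n \ minkMirrors W with hO
  have hqH : q ∈ hypSpace n := (connectedComponentIn_subset O x₀ hq).1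
  obtain ⟨ε, hεpos, hloc⟩ := comp_local hpd hx₀ hq
  have hsqq : mink (s • q) (s • q) = -(s^2) := by
    rw [mink_smul_left, mink_smul_right, hqH.1]; ring
  set N : (Fin (n+1) → ℝ) → (Fin (n+1) → ℝ) := fun v => (Real.sqrt (-(mink v v)))⁻¹ • v
    with hN
  have hNsq : N (s • q) = q := by
    rw [hN]
    simp only [hsqq]
    rw [neg_neg, Real.sqrt_sq (le_of_lt hs), smul_smul, inv_mul_cancel₀ (ne_of_gt hs), one_smul]
  have hNcont : ContinuousAt N (s • q) := by
    have hc : Continuous fun v : Fin (n+1) → ℝ => Real.sqrt (-(mink v v)) :=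
      Real.continuous_sqrt.comp mink_self_continuous.neg
    refine ContinuousAt.smul (ContinuousAt.inv₀ hc.continuousAt ?_) continuousAt_id
    show Real.sqrt (-(mink (s • q) (s • q))) ≠ 0
    rw [hsqq, neg_neg, Real.sqrt_sq hs.le]
    exact ne_of_gt hs
  have hev : ∀ᶠ v in nhds (s • q), mink v v < 0 ∧ 0 < v 0 ∧ dist (N v) q < ε := by
    have h1 : ∀ᶠ v in nhds (s • q), mink v v < 0 := by
      have : IsOpen {v : Fin (n+1) → ℝ | mink v v < 0} :=
        isOpen_lt mink_self_continuous continuous_const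
      refine this.eventually_mem ?_
      show mink (s • q) (s • q) < 0
      rw [hsqq]; nlinarith
    have h2 : ∀ᶠ v in nhds (s • q), 0 < v 0 := by
      have : IsOpen {v : Fin (n+1) → ℝ | 0 < v 0} :=
        isOpen_lt continuous_const (continuous_apply 0)
      refine this.eventually_mem ?_
      show 0 < (s • q) 0
      have := hqH.2
      simp only [Pi.smul_apply, smul_eq_mul]
      positivity
    have h3 : ∀ᶠ v in nhds (s • q), dist (N v) q < ε := by
      have := hNcont.tendsto
      rw [hNsq] at this
      exact this.eventually (Metric.ball_mem_nhds q hεpos)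
    filter_upwards [h1, h2, h3] with v hv1 hv2 hv3
    exact ⟨hv1, hv2, hv3⟩
  rw [Metric.eventually_nhds_iff] at hev
  obtain ⟨ε', hε'pos, hball⟩ := hev
  have hsubC : Metric.ball (s • q) ε' ⊆ C := by
    intro v hv
    obtain ⟨hv1, hv2, hv3⟩ := hball (Metric.mem_ball.mp hv)
    set m := Real.sqrt (-(mink v v)) with hm
    have hmpos : 0 < m := Real.sqrt_pos.mpr (by linarith)
    have hm2 : m^2 = -(mink v v) := Real.sq_sqrt (by linarith)
    have hzhyp : N v ∈ hypSpace n := by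
      constructor
      · show mink (m⁻¹ • v) (m⁻¹ • v) = -1
        rw [mink_smul_left, mink_smul_right]
        field_simp
        nlinarith [hm2]
      · show 0 < (m⁻¹ • v) 0
        simp only [Pi.smul_apply, smul_eq_mul]
        positivity
    have hzcomp := hloc (N v) hzhyp hv3
    have hvm : v = m • N v := by
      rw [hN]
      simp only []
      rw [smul_smul, mul_inv_cancel₀ (ne_of_gt hmpos), one_smul]
    rw [hC]
    exact ⟨m, le_of_lt hmpos, N v, by rw [hD]; exact ⟨subset_closure hzcomp,
      (connectedComponentIn_subset O x₀ hzcomp).1⟩, hvm⟩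
  exact mem_interior.mpr ⟨Metric.ball (s • q) ε', hsubC, Metric.isOpen_ball,
    Metric.mem_ball_self hε'pos⟩

lemma interior_decomp
    (hD : D = closure (connectedComponentIn (hypSpace n \ minkMirrors W) x₀) ∩ hypSpace n)
    (hC : C = {v : Fin (n + 1) → ℝ | ∃ t : ℝ, 0 ≤ t ∧ ∃ d ∈ D, v = t • d})
    {x : Fin (n+1) → ℝ} (hx : x ∈ interior C) :
    ∃ t : ℝ, 0 < t ∧ ∃ c ∈ D, x = t • c := by
  have hxC : x ∈ C := interior_subset hx
  rw [hC] at hxC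
  obtain ⟨t, ht, d, hd, hxd⟩ := hxC
  rcases eq_or_lt_of_le ht with rfl | htpos
  · exfalso
    rw [zero_smul] at hxd
    subst hxd
    obtain ⟨ε, hεpos, hball⟩ := Metric.mem_nhds_iff.mp (mem_interior_iff_mem_nhds.mp hx)
    set vbad : Fin (n+1) → ℝ := (-(ε/2)) • ((Pi.single (0 : Fin (n+1)) (1:ℝ)) : Fin (n+1) → ℝ) with hvbad
    have hvball : vbad ∈ Metric.ball 0 ε := by
      rw [Metric.mem_ball, dist_eq_norm, sub_zero, hvbad, norm_smul]
      have h1 : ‖((Pi.single (0 : Fin (n+1)) (1:ℝ)) : Fin (n+1) → ℝ)‖ ≤ 1 := by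
        rw [pi_norm_le_iff_of_nonneg (by norm_num)]
        intro i
        rw [Pi.single_apply]
        split <;> simp
      have h2 : ‖(-(ε/2))‖ = ε/2 := by
        rw [Real.norm_eq_abs, abs_neg, abs_of_nonneg (by linarith)]
      nlinarith [norm_nonneg ((Pi.single (0 : Fin (n+1)) (1:ℝ)) : Fin (n+1) → ℝ)]
    have hvC := hball hvball
    rw [hC] at hvC
    obtain ⟨t', ht', d', hd', hvd⟩ := hvC
    have hd'H : d' ∈ hypSpace n := by rw [hD] at hd'; exact hd'.2
    have h0 : vbad 0 = -(ε/2) := by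
      rw [hvbad]
      simp
    have h1 : vbad 0 = t' * d' 0 := by rw [hvd]; simp
    have := hyp_one_le hd'H
    nlinarith
  · exact ⟨t, htpos, d, hd, hxd⟩

/-- The key inequality: any interior point of the chamber cone pairs at least as well
with a component point as with any of its `W`-translates. -/
lemma key_ineq_comp
    (hform : ∀ w ∈ W, ∀ x y : Fin (n + 1) → ℝ, mink (w x) (w y) = mink x y)
    (hHinv : ∀ w ∈ W, ∀ x ∈ hypSpace n, w x ∈ hypSpace n)
    (hpd : ∀ K : Set (Fin (n + 1) → ℝ), IsCompact K → K ⊆ hypSpace n →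
      {g : (Fin (n + 1) → ℝ) ≃ₗ[ℝ] (Fin (n + 1) → ℝ) | g ∈ W ∧ ∃ x ∈ K, g x ∈ K}.Finite)
    (hx₀ : x₀ ∈ hypSpace n \ minkMirrors W)
    (hD : D = closure (connectedComponentIn (hypSpace n \ minkMirrors W) x₀) ∩ hypSpace n)
    (hC : C = {v : Fin (n + 1) → ℝ | ∃ t : ℝ, 0 ≤ t ∧ ∃ d ∈ D, v = t • d})
    (hdisj : ∀ w ∈ W, ∀ w' ∈ W, w ≠ w' →
      ∀ x ∈ interior C, ∀ x' ∈ interior C, w x ≠ w' x')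
    {x : Fin (n+1) → ℝ} (hx : x ∈ interior C)
    {p : Fin (n+1) → ℝ} (hp : p ∈ connectedComponentIn (hypSpace n \ minkMirrors W) x₀)
    {v : (Fin (n + 1) → ℝ) ≃ₗ[ℝ] (Fin (n + 1) → ℝ)} (hv : v ∈ W) :
    mink x (v p) ≤ mink x p := by
  set O := hypSpace n \ minkMirrors W with hO
  have hpO : p ∈ O := connectedComponentIn_subset O x₀ hp
  have hpH : p ∈ hypSpace n := hpO.1
  obtain ⟨t, htpos, c, hcD, hxc⟩ := interior_decomp hD hC hx
  have hcH : c ∈ hypSpace n := by rw [hD] at hcD; exact hcD.2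
  set r := mink x p with hr
  set S := Real.sqrt ((c 0)^2 - 1) with hS
  have hSc : S - c 0 < 0 := sqrt_lt_self_hyp hcH
  have hbound : ∀ z ∈ hypSpace n, r ≤ mink x z → z 0 ≤ r / (t * (S - c 0)) := by
    intro z hzH hrz
    have h1 : mink x z = t * mink c z := by rw [hxc, mink_smul_left]
    have h2 : mink c z ≤ (S - c 0) * z 0 := mink_le_cap hcH hzH
    have hA : t * (S - c 0) < 0 := mul_neg_of_pos_of_neg htpos hSc
    rw [le_div_iff_of_neg hA]
    nlinarith
  set M := max (r / (t * (S - c 0))) (p 0) with hM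
  set K := hypCap n M with hK
  have hpK : p ∈ K := ⟨hpH, le_max_right _ _⟩
  set F' := {g : (Fin (n + 1) → ℝ) ≃ₗ[ℝ] (Fin (n + 1) → ℝ) | g ∈ W ∧ r ≤ mink x (g p)}
    with hF'
  have hF'fin : F'.Finite := by
    refine (hpd K (hypCap_compact M) (hypCap_subset M)).subset ?_
    rintro g ⟨hgW, hgr⟩
    refine ⟨hgW, p, hpK, ?_⟩
    have hgpH : g p ∈ hypSpace n := hHinv g hgW p hpH
    exact ⟨hgpH, le_trans (hbound (g p) hgpH hgr) (le_max_left _ _)⟩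
  have h1F' : (1 : (Fin (n + 1) → ℝ) ≃ₗ[ℝ] (Fin (n + 1) → ℝ)) ∈ F' :=
    ⟨one_mem W, le_of_eq rfl⟩
  obtain ⟨v₀, hv₀mem, hv₀max⟩ := Finset.exists_max_image hF'fin.toFinset
    (fun g => mink x (g p)) ⟨1, hF'fin.mem_toFinset.mpr h1F'⟩
  rw [Set.Finite.mem_toFinset] at hv₀mem
  obtain ⟨hv₀W, hv₀r⟩ := hv₀mem
  have hglob : ∀ g ∈ W, mink x (g p) ≤ mink x (v₀ p) := by
    intro g hgW
    rcases le_or_gt r (mink x (g p)) with h | h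
    · exact hv₀max g (hF'fin.mem_toFinset.mpr ⟨hgW, h⟩)
    · exact le_trans (le_of_lt h) hv₀r
  set z := v₀ p with hz
  have hzH : z ∈ hypSpace n := hHinv v₀ hv₀W p hpH
  -- for every reflection in W, z and x are strictly on the same side of the mirror
  have hzsign : ∀ g ∈ W, ∀ e : Fin (n+1) → ℝ, 0 < mink e e →
      (∀ y, g y = y - ((2 * mink y e) / mink e e) • e) → 0 < mink z e * mink x e := by
    intro g hgW e he hg
    have hgz : mink x (g z) ≤ mink x z := by
      have : g z = (g * v₀) p := rfl
      rw [this]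
      exact hglob (g * v₀) (mul_mem hgW hv₀W)
    have hexp : mink x (g z) = mink x z - (2 * mink z e / mink e e) * mink x e := by
      rw [hg z, mink_sub_right, mink_smul_right]
    have hnn : 0 ≤ (2 * mink z e / mink e e) * mink x e := by linarith [hexp ▸ hgz]
    have hprod : 0 ≤ mink z e * mink x e := by
      have hid : (2 * mink z e / mink e e) * mink x e * (mink e e / 2)
          = mink z e * mink x e := by
        field_simp
      rw [← hid]
      exact mul_nonneg hnn (by linarith)
    -- strictness
    have hxe : mink x e ≠ 0 := interior_not_fixed hdisj hgW he hg hx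
    have hze : mink z e ≠ 0 := by
      intro h0
      have hfixz : g z = z := (refl_fix_iff he hg z).mpr h0
      -- conjugate reflection fixes p
      set f := v₀⁻¹ e with hf
      have hinvW : v₀⁻¹ ∈ W := inv_mem hv₀W
      have hff : mink f f = mink e e := hform v₀⁻¹ hinvW e e
      have hinvapp : ∀ y : Fin (n+1) → ℝ, v₀⁻¹ (v₀ y) = y := by
        intro y
        have : (v₀⁻¹ * v₀) y = (1 : (Fin (n + 1) → ℝ) ≃ₗ[ℝ] (Fin (n + 1) → ℝ)) y := by
          rw [inv_mul_cancel]
        exact this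
      have hcoef : ∀ y : Fin (n+1) → ℝ, mink (v₀ y) e = mink y f := by
        intro y
        have := hform v₀⁻¹ hinvW (v₀ y) e
        rw [hinvapp y] at this
        exact this.symm
      set h := v₀⁻¹ * g * v₀ with hh
      have hhW : h ∈ W := mul_mem (mul_mem hinvW hgW) hv₀W
      have hhrefl : ∀ y, h y = y - ((2 * mink y f) / mink f f) • f := by
        intro y
        have h1 : h y = v₀⁻¹ (g (v₀ y)) := rfl
        rw [h1, hg (v₀ y), map_sub, map_smul, hinvapp y, hcoef y, hff]
      have hhp : h p = p := by
        have h1 : h p = v₀⁻¹ (g z) := rfl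
        rw [h1, hfixz]
        exact hinvapp p
      have hfpos : 0 < mink f f := by rw [hff]; exact he
      exact hpO.2 (mem_mirrors_of_fix hhW ⟨f, hfpos, hhrefl⟩ hhp)
    rcases hprod.lt_or_eq with h | h
    · exact h
    · exfalso
      rcases mul_eq_zero.mp h.symm with h' | h'
      · exact hze h'
      · exact hxe h'
  -- hence z is in the component
  have hzcomp : z ∈ connectedComponentIn O x₀ := by
    refine geodesic_comp hx₀ hp hzH ?_
    intro g hgW e he hg
    have h1 := hzsign g hgW e he hg
    have h2 := x_comp_sign hx₀ hD hdisj hgW he hg hx htpos hcD hxc hp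
    nlinarith [mul_pos h1 h2, sq_nonneg (mink x e)]
  -- finally, v₀ must be the identity
  have hv₀1 : v₀ = 1 := by
    by_contra hne1
    have hpint : p ∈ interior C := by
      have := comp_subset_interior hpd hx₀ hD hC hp one_pos
      rwa [one_smul] at this
    have hzint : z ∈ interior C := by
      have := comp_subset_interior hpd hx₀ hD hC hzcomp one_pos
      rwa [one_smul] at this
    have := hdisj v₀ hv₀W 1 (one_mem W) hne1 p hpint z hzint
    exact this rfl
  have heqzp : mink x z = mink x p := by rw [hz, hv₀1]; rfl
  have h2 := hglob v hv
  linarith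

lemma key_ineq_D
    (hform : ∀ w ∈ W, ∀ x y : Fin (n + 1) → ℝ, mink (w x) (w y) = mink x y)
    (hHinv : ∀ w ∈ W, ∀ x ∈ hypSpace n, w x ∈ hypSpace n)
    (hpd : ∀ K : Set (Fin (n + 1) → ℝ), IsCompact K → K ⊆ hypSpace n →
      {g : (Fin (n + 1) → ℝ) ≃ₗ[ℝ] (Fin (n + 1) → ℝ) | g ∈ W ∧ ∃ x ∈ K, g x ∈ K}.Finite)
    (hx₀ : x₀ ∈ hypSpace n \ minkMirrors W)
    (hD : D = closure (connectedComponentIn (hypSpace n \ minkMirrors W) x₀) ∩ hypSpace n)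
    (hC : C = {v : Fin (n + 1) → ℝ | ∃ t : ℝ, 0 ≤ t ∧ ∃ d ∈ D, v = t • d})
    (hdisj : ∀ w ∈ W, ∀ w' ∈ W, w ≠ w' →
      ∀ x ∈ interior C, ∀ x' ∈ interior C, w x ≠ w' x')
    {x : Fin (n+1) → ℝ} (hx : x ∈ interior C)
    {p : Fin (n+1) → ℝ} (hp : p ∈ D)
    {v : (Fin (n + 1) → ℝ) ≃ₗ[ℝ] (Fin (n + 1) → ℝ)} (hv : v ∈ W) :
    mink x (v p) ≤ mink x p := by
  set O := hypSpace n \ minkMirrors W with hO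
  have hclosed : IsClosed {p : Fin (n+1) → ℝ | mink x (v p) ≤ mink x p} := by
    refine isClosed_le ?_ (mink_continuous_right x)
    exact (mink_continuous_right x).comp
      (LinearMap.continuous_of_finiteDimensional (v : (Fin (n+1) → ℝ) →ₗ[ℝ] (Fin (n+1) → ℝ)))
  have hsub : closure (connectedComponentIn O x₀) ⊆
      {p : Fin (n+1) → ℝ | mink x (v p) ≤ mink x p} := by
    refine closure_minimal ?_ hclosed
    intro q hq
    exact key_ineq_comp hform hHinv hpd hx₀ hD hC hdisj hx hq hv
  rw [hD] at hp
  exact hsub hp.1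

end Main


/-- For a cocompact hyperbolic reflection group `W` with fundamental chamber cone `C`:
every `x - w x` with `x ∈ C°` lies in the dual cone `C*`, and for distinct `w, w' ∈ W`
the sets `(1 - w)(C°)` and `(1 - w')(C°)` are disjoint. -/
theorem hyperbolic_oneSub_mem_dual
    {n : ℕ} (W : Subgroup ((Fin (n + 1) → ℝ) ≃ₗ[ℝ] (Fin (n + 1) → ℝ)))
    (D C : Set (Fin (n + 1) → ℝ))
    (hform : ∀ w ∈ W, ∀ x y : Fin (n + 1) → ℝ, mink (w x) (w y) = mink x y)
    (hHinv : ∀ w ∈ W, ∀ x ∈ hypSpace n, w x ∈ hypSpace n)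
    (hWgen : Subgroup.closure
      {g : (Fin (n + 1) → ℝ) ≃ₗ[ℝ] (Fin (n + 1) → ℝ) | g ∈ W ∧ IsMinkRefl g} = W)
    (hpd : ∀ K : Set (Fin (n + 1) → ℝ), IsCompact K → K ⊆ hypSpace n →
      {g : (Fin (n + 1) → ℝ) ≃ₗ[ℝ] (Fin (n + 1) → ℝ) | g ∈ W ∧ ∃ x ∈ K, g x ∈ K}.Finite)
    (hD : ∃ x₀ ∈ hypSpace n \ minkMirrors W,
      D = closure (connectedComponentIn (hypSpace n \ minkMirrors W) x₀) ∩ hypSpace n)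
    (hDcpt : IsCompact D)
    (hcover : ∀ x ∈ hypSpace n, ∃ w ∈ W, ∃ d ∈ D, w d = x)
    (hC : C = {v : Fin (n + 1) → ℝ | ∃ t : ℝ, 0 ≤ t ∧ ∃ d ∈ D, v = t • d})
    (hdisj : ∀ w ∈ W, ∀ w' ∈ W, w ≠ w' →
      ∀ x ∈ interior C, ∀ x' ∈ interior C, w x ≠ w' x') :
    (∀ w ∈ W, ∀ x ∈ interior C, ∀ y ∈ C, 0 ≤ mink (x - w x) y) ∧
    (∀ w ∈ W, ∀ w' ∈ W, w ≠ w' →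
      Disjoint {u : Fin (n + 1) → ℝ | ∃ x ∈ interior C, u = x - w x}
        {u : Fin (n + 1) → ℝ | ∃ x ∈ interior C, u = x - w' x}) := by
  obtain ⟨x₀, hx₀, hDeq⟩ := hD
  have hinvapp : ∀ w : (Fin (n + 1) → ℝ) ≃ₗ[ℝ] (Fin (n + 1) → ℝ),
      ∀ y : Fin (n+1) → ℝ, w⁻¹ (w y) = y := by
    intro w y
    have : (w⁻¹ * w) y = (1 : (Fin (n + 1) → ℝ) ≃ₗ[ℝ] (Fin (n + 1) → ℝ)) y := by
      rw [inv_mul_cancel]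
    exact this
  have part1 : ∀ w ∈ W, ∀ x ∈ interior C, ∀ y ∈ C, 0 ≤ mink (x - w x) y := by
    intro w hw x hx y hy
    rw [hC] at hy
    obtain ⟨t, ht, d, hdD, hyd⟩ := hy
    have hkey : mink x (w⁻¹ d) ≤ mink x d :=
      key_ineq_D hform hHinv hpd hx₀ hDeq hC hdisj hx hdD (inv_mem hw)
    have hwxd : mink (w x) d = mink x (w⁻¹ d) := by
      have h := hform w⁻¹ (inv_mem hw) (w x) d
      rw [hinvapp w x] at h
      exact h.symm
    rw [hyd, mink_smul_right, mink_sub_left, hwxd]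
    exact mul_nonneg ht (by linarith)
  refine ⟨part1, ?_⟩
  intro w hw w' hw' hne
  rw [Set.disjoint_left]
  rintro u ⟨x, hx, hux⟩ ⟨x', hx', hux'⟩
  have hxx' : x - w x = x' - w' x' := by rw [← hux, ← hux']
  have h1 : x - x' = w x - w' x' := by
    rw [sub_eq_sub_iff_sub_eq_sub] at hxx'
    exact hxx'
  have e1 : mink (x - x') (x - x')
      = mink x x - 2 * mink x x' + mink x' x' := by
    rw [mink_sub_left, mink_sub_right, mink_sub_right, mink_comm x' x]; ring
  have e2 : mink (w x - w' x') (w x - w' x')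
      = mink x x - 2 * mink (w x) (w' x') + mink x' x' := by
    rw [mink_sub_left, mink_sub_right, mink_sub_right, mink_comm (w' x') (w x),
      hform w hw x x, hform w' hw' x' x']
    ring
  have hkeyeq : mink x x' = mink (w x) (w' x') := by
    rw [h1] at e1
    rw [e1] at e2
    linarith
  set vv := w⁻¹ * w' with hvv
  have hvvW : vv ∈ W := mul_mem (inv_mem hw) hw'
  have hvvx' : mink x x' = mink x (vv x') := by
    have h := hform w⁻¹ (inv_mem hw) (w x) (w' x')
    rw [hinvapp w x] at h
    have h2 : w⁻¹ (w' x') = vv x' := rfl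
    rw [h2] at h
    rw [hkeyeq, ← h]
  set u' := x' - vv x' with hu'
  have horthx : mink u' x = 0 := by
    rw [hu', mink_sub_left, mink_comm x' x, mink_comm (vv x') x]
    linarith [hvvx']
  have hzero : ∀ d : Fin (n+1) → ℝ, mink u' d = 0 := by
    intro d
    rcases eq_or_ne d 0 with rfl | hdne
    · exact mink_zero_right u'
    obtain ⟨ρ, hρpos, hball⟩ := Metric.mem_nhds_iff.mp (mem_interior_iff_mem_nhds.mp hx)
    set δ := ρ / (2 * ‖d‖) with hδ
    have hδpos : 0 < δ := by
      have : 0 < ‖d‖ := norm_pos_iff.mpr hdne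
      positivity
    have hmem : ∀ σ : ℝ, σ = δ ∨ σ = -δ → x + σ • d ∈ C := by
      intro σ hσ
      refine hball ?_
      rw [Metric.mem_ball, dist_eq_norm]
      have hsub : x + σ • d - x = σ • d := by abel
      rw [hsub, norm_smul]
      have hσabs : ‖σ‖ = δ := by
        rcases hσ with rfl | rfl
        · rw [Real.norm_eq_abs, abs_of_pos hδpos]
        · rw [Real.norm_eq_abs, abs_neg, abs_of_pos hδpos]
      rw [hσabs, hδ]
      have hdpos : 0 < ‖d‖ := norm_pos_iff.mpr hdne
      rw [div_mul_eq_mul_div, div_lt_iff₀ (by positivity)]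
      nlinarith
    have hplus := part1 vv hvvW x' hx' (x + δ • d) (hmem δ (Or.inl rfl))
    have hminus := part1 vv hvvW x' hx' (x + (-δ) • d) (hmem (-δ) (Or.inr rfl))
    rw [mink_add_right, mink_smul_right] at hplus hminus
    have hpx : mink (x' - vv x') x = 0 := horthx
    rw [hpx] at hplus hminus
    have hle : 0 ≤ δ * mink u' d := by rw [hu']; linarith [hplus]
    have hge : 0 ≤ -δ * mink u' d := by rw [hu']; linarith [hminus]
    nlinarith
  have hu'0 : u' = 0 := mink_nondegenerate hzero
  have hfix : vv x' = x' := by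
    have := sub_eq_zero.mp hu'0
    exact this.symm
  have hwx' : w x' = w' x' := by
    have h2 : w (vv x') = (w * (w⁻¹ * w')) x' := rfl
    have h3 : w * (w⁻¹ * w') = w' := by group
    rw [hfix, h3] at h2
    exact h2
  exact hdisj w hw w' hw' hne x' hx' x' hx' hwx'
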